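/- arXiv:2011.14935 — 5 statements merged into one kernel-verified Lean document; each statement's English description precedes it below -/
import Mathlib

section
/- Stability theorem for bosonic BdG systems (Theorem 1, quantitative content): let A₁ and A₂ be Hermitian n×n complex matrices, B₁ an n×n complex matrix, E a nonzero real number, and ψ_p, ψ_h ∈ ℂⁿ with A₁ ψ_p = E ψ_p and A₂* ψ_h = −E ψ_h. Then the first-order degenerate-perturbation matrix [[0, b], [−b̄, 0]], where b = ψ_p† B₁ ψ_h, has exactly the eigenvalues +i|E⁽¹⁾| and −i|E⁽¹⁾| with |E⁽¹⁾| = |ψ_p† ⌈A, B⌋ ψ_h| / (2|E|), so the degenerate level E splits into the complex-conjugate pair E ± i|E⁽¹⁾|; in particular the splitting is purely imaginary and vanishes if and only if the transition is forbidden, i.e. ψ_p† ⌈A, B⌋ ψ_h = 0. -/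
open Matrix

/-- **Stability theorem for bosonic BdG systems (quantitative form).**
Let `A₁ ψ_p = E ψ_p`, `A₂* ψ_h = -E ψ_h` with `A₁, A₂` Hermitian and `E ≠ 0` real.
Setting `b = ψ_p† B₁ ψ_h` and `|E⁽¹⁾| = |ψ_p† (A₁B₁ - B₁A₂*) ψ_h| / (2|E|)`, the
first-order degenerate-perturbation matrix `[[0, b], [-conj b, 0]]` has exactly the
eigenvalues `+i|E⁽¹⁾|` and `-i|E⁽¹⁾|` (so the level `E` splits into the complex
conjugate pair `E ± i|E⁽¹⁾|`), and the splitting vanishes iff the transition is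
forbidden: `ψ_p† (A₁B₁ - B₁A₂*) ψ_h = 0`. -/
theorem bdg_stability_theorem {n : ℕ}
    (A₁ A₂ B₁ : Matrix (Fin n) (Fin n) ℂ)
    (hA₁ : A₁.IsHermitian) (hA₂ : A₂.IsHermitian)
    (E : ℝ) (hE : E ≠ 0) (ψp ψh : Fin n → ℂ)
    (hψp : A₁.mulVec ψp = (E : ℂ) • ψp)
    (hψh : (A₂.map (starRingEnd ℂ)).mulVec ψh = (-E : ℂ) • ψh)
    (b : ℂ) (hb : b = star ψp ⬝ᵥ B₁.mulVec ψh)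
    (M : Matrix (Fin 2) (Fin 2) ℂ)
    (hM : M = !![0, b; -(starRingEnd ℂ b), 0])
    (E1 : ℝ)
    (hE1 : E1 = ‖star ψp ⬝ᵥ (A₁ * B₁ - B₁ * A₂.map (starRingEnd ℂ)).mulVec ψh‖
                  / (2 * |E|)) :
    (∀ lam : ℂ,
      (∃ v : Fin 2 → ℂ, v ≠ 0 ∧ M.mulVec v = lam • v) ↔
        (lam = Complex.I * E1 ∨ lam = -(Complex.I * E1))) ∧
    (E1 = 0 ↔ star ψp ⬝ᵥ (A₁ * B₁ - B₁ * A₂.map (starRingEnd ℂ)).mulVec ψh = 0) := by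
  -- key computation: the matrix element equals 2 E b
  have h1 : star ψp ⬝ᵥ (A₁ * B₁).mulVec ψh = (E : ℂ) * b := by
    rw [← Matrix.mulVec_mulVec, Matrix.dotProduct_mulVec]
    have hv : Matrix.vecMul (star ψp) A₁ = (E : ℂ) • star ψp := by
      calc Matrix.vecMul (star ψp) A₁ = Matrix.vecMul (star ψp) A₁ᴴ := by rw [hA₁.eq]
        _ = star (A₁.mulVec ψp) := (Matrix.star_mulVec ..).symm
        _ = (E : ℂ) • star ψp := by
            rw [hψp, star_smul]; simp [Complex.star_def]
    rw [hv, smul_dotProduct, hb, smul_eq_mul]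
  have h2 : star ψp ⬝ᵥ (B₁ * A₂.map (starRingEnd ℂ)).mulVec ψh = -(E : ℂ) * b := by
    rw [← Matrix.mulVec_mulVec, hψh, Matrix.mulVec_smul, dotProduct_smul, hb, smul_eq_mul]
  have key : star ψp ⬝ᵥ (A₁ * B₁ - B₁ * A₂.map (starRingEnd ℂ)).mulVec ψh = 2 * (E : ℂ) * b := by
    rw [Matrix.sub_mulVec, dotProduct_sub, h1, h2]; ring
  have habs : ‖2 * (E : ℂ) * b‖ = 2 * |E| * ‖b‖ := by
    simp [_root_.map_mul, Complex.norm_real]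
  have hE1b : E1 = ‖b‖ := by
    rw [hE1, key, habs]
    field_simp
  have hbb2 : (starRingEnd ℂ) b * b = ((‖b‖ : ℂ))^2 := by
    rw [mul_comm, Complex.mul_conj]
    norm_cast
    exact (Complex.sq_norm b).symm
  constructor
  · intro lam
    constructor
    · rintro ⟨v, hv, heig⟩
      have e0 : b * v 1 = lam * v 0 := by
        have := congrFun heig 0
        simpa [hM, Matrix.mulVec, dotProduct, Fin.sum_univ_two] using this
      have e1 : -(starRingEnd ℂ b) * v 0 = lam * v 1 := by
        have := congrFun heig 1
        simpa [hM, Matrix.mulVec, dotProduct, Fin.sum_univ_two] using this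
      have hsq : lam ^ 2 = -(‖b‖ : ℂ) ^ 2 := by
        have hbb : b * starRingEnd ℂ b = (‖b‖ : ℂ) ^ 2 := by
          rw [Complex.mul_conj]
          norm_cast
          exact (Complex.sq_norm b).symm
        rcases (Function.ne_iff.mp hv) with ⟨i, hi⟩
        fin_cases i
        · have : lam ^ 2 * v 0 = -(‖b‖ : ℂ) ^ 2 * v 0 := by
            have := e0; have := e1
            calc lam ^ 2 * v 0 = lam * (lam * v 0) := by ring
              _ = lam * (b * v 1) := by rw [e0]
              _ = b * (lam * v 1) := by ring
              _ = b * (-(starRingEnd ℂ b) * v 0) := by rw [e1]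
              _ = -(b * starRingEnd ℂ b) * v 0 := by ring
              _ = -(‖b‖ : ℂ) ^ 2 * v 0 := by rw [hbb]
          exact mul_right_cancel₀ hi this
        · have : lam ^ 2 * v 1 = -(‖b‖ : ℂ) ^ 2 * v 1 := by
            calc lam ^ 2 * v 1 = lam * (lam * v 1) := by ring
              _ = lam * (-(starRingEnd ℂ b) * v 0) := by rw [e1]
              _ = -(starRingEnd ℂ b) * (lam * v 0) := by ring
              _ = -(starRingEnd ℂ b) * (b * v 1) := by rw [e0]
              _ = -(b * starRingEnd ℂ b) * v 1 := by ring
              _ = -(‖b‖ : ℂ) ^ 2 * v 1 := by rw [hbb]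
          exact mul_right_cancel₀ hi this
      have hfac : (lam - Complex.I * E1) * (lam + Complex.I * E1) = 0 := by
        have hI : (Complex.I * (E1 : ℂ)) ^ 2 = -(‖b‖ : ℂ) ^ 2 := by
          rw [hE1b]; ring_nf; rw [Complex.I_sq]; ring
        have : lam ^ 2 - (Complex.I * (E1 : ℂ)) ^ 2 = 0 := by rw [hsq, hI]; ring
        linear_combination this
      rcases mul_eq_zero.mp hfac with h | h
      · left; linear_combination h
      · right; linear_combination h
    · intro hlam
      by_cases hb0 : b = 0
      · refine ⟨![1, 0], ?_, ?_⟩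
        · intro h; have := congrFun h 0; simp at this
        · have hE10 : E1 = 0 := by rw [hE1b, hb0]; simp
          funext i; fin_cases i <;>
            simp [hM, hb0, hE10, Matrix.mulVec, dotProduct, Fin.sum_univ_two] <;>
            rcases hlam with h | h <;> simp [h, hE10]
      · rcases hlam with h | h
        · refine ⟨![b, Complex.I * E1], ?_, ?_⟩
          · intro hcon; have := congrFun hcon 0; simp [hb0] at this
          · funext i; fin_cases i <;>
              simp [hM, h, Matrix.mulVec, dotProduct, Fin.sum_univ_two, hE1b] <;>
              (first
                | ring1
                | linear_combination (-1 : ℂ) * hbb2 - ((‖b‖ : ℂ))^2 * Complex.I_sq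
                | linear_combination hbb2 + ((‖b‖ : ℂ))^2 * Complex.I_sq)
        · refine ⟨![b, -(Complex.I * E1)], ?_, ?_⟩
          · intro hcon; have := congrFun hcon 0; simp [hb0] at this
          · funext i; fin_cases i <;>
              simp [hM, h, Matrix.mulVec, dotProduct, Fin.sum_univ_two, hE1b] <;>
              (first
                | ring1
                | linear_combination (-1 : ℂ) * hbb2 - ((‖b‖ : ℂ))^2 * Complex.I_sq
                | linear_combination hbb2 + ((‖b‖ : ℂ))^2 * Complex.I_sq)
  · rw [hE1b, key]
    constructor
    · intro h
      have hb0 : b = 0 := by simpa using h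
      simp [hb0]
    · intro h
      have hb0 : b = 0 := (mul_eq_zero.mp h).resolve_left
        (mul_ne_zero two_ne_zero (Complex.ofReal_ne_zero.mpr hE))
      simp [hb0]
end

section
/- The square of the bosonic BdG Hamiltonian H = [[A₁, B₁], [−B₂*, −A₂*]] is a Hermitian matrix if and only if the unconventional commutator vanishes: H² = (H²)† if and only if ⌈A, B⌋ := A₁B₁ − B₁A₂* = 0. -/
open Matrix

/-- **Hermiticity criterion for the square of the bosonic BdG Hamiltonian.**
With `H = [[A₁, B₁], [-B₂*, -A₂*]]`, the square `H²` is Hermitian if and only if the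
unconventional commutator vanishes: `⌈A,B⌋ = A₁B₁ - B₁A₂* = 0`. -/
theorem bdg_square_hermitian_iff_commutator_vanishes {n : ℕ}
    (A₁ A₂ B₁ B₂ : Matrix (Fin n) (Fin n) ℂ)
    (hA₁ : A₁.IsHermitian) (hA₂ : A₂.IsHermitian) (hB : B₁ = B₂ᵀ)
    (H : Matrix (Fin n ⊕ Fin n) (Fin n ⊕ Fin n) ℂ)
    (hH : H = Matrix.fromBlocks A₁ B₁ (-(B₂.map (starRingEnd ℂ))) (-(A₂.map (starRingEnd ℂ)))) :
    (H * H).IsHermitian ↔ A₁ * B₁ - B₁ * A₂.map (starRingEnd ℂ) = 0 := by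
  subst hB hH
  set s := starRingEnd ℂ with hs
  set M := A₂.map s with hM
  have hA2 : Mᴴ = M := by
    ext i j
    simp only [hM, conjTranspose_apply, map_apply]
    have := congrFun (congrFun hA₂ j) i
    simp only [conjTranspose_apply] at this
    rw [hs]
    simp only [starRingEnd_apply, star_star]
    exact this.symm
  have hB2 : (B₂ᵀ)ᴴ = B₂.map s := by
    ext i j
    simp [hs, conjTranspose_apply, map_apply]
  have hB2' : (B₂.map s)ᴴ = B₂ᵀ := by
    ext i j
    simp [conjTranspose_apply, map_apply]
  rw [IsHermitian, conjTranspose_mul, fromBlocks_conjTranspose, conjTranspose_neg,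
    conjTranspose_neg, hA₁.eq, hA2, hB2, hB2', fromBlocks_multiply, fromBlocks_multiply,
    fromBlocks_inj]
  constructor
  · rintro ⟨-, h12, -, -⟩
    -- h12 : A₁ * -B₂ᵀ + -B₂ᵀ * -M = A₁ * B₂ᵀ + B₂ᵀ * -M
    have key : (A₁ * B₂ᵀ - B₂ᵀ * M) + (A₁ * B₂ᵀ - B₂ᵀ * M) = 0 := by
      simp only [mul_neg, neg_mul, neg_neg] at h12
      have hn : A₁ * B₂ᵀ - B₂ᵀ * M = -(A₁ * B₂ᵀ - B₂ᵀ * M) := by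
        calc A₁ * B₂ᵀ - B₂ᵀ * M = A₁ * B₂ᵀ + -(B₂ᵀ * M) := by abel
          _ = -(A₁ * B₂ᵀ) + B₂ᵀ * M := h12.symm
          _ = -(A₁ * B₂ᵀ - B₂ᵀ * M) := by abel
      exact eq_neg_iff_add_eq_zero.mp hn
    have h2 : (2 : ℂ) • (A₁ * B₂ᵀ - B₂ᵀ * M) = 0 := by
      rw [two_smul]; exact key
    rcases smul_eq_zero.mp h2 with h | h
    · exact absurd h two_ne_zero
    · exact h
  · intro h
    have hW : B₂.map s * A₁ - M * B₂.map s = 0 := by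
      have := congrArg conjTranspose h
      simpa [conjTranspose_sub, conjTranspose_mul, hA₁.eq, hA2, hB2] using this
    have hX : A₁ * B₂ᵀ = B₂ᵀ * M := sub_eq_zero.mp h
    have hW' : B₂.map s * A₁ = M * B₂.map s := sub_eq_zero.mp hW
    refine ⟨?_, ?_, ?_, ?_⟩
    · simp only [mul_neg, neg_mul]
    · simp only [mul_neg, neg_mul, neg_neg]
      rw [hX]; abel
    · simp only [mul_neg, neg_mul, neg_neg]
      rw [hW']; abel
    · simp only [mul_neg, neg_mul]
end

section
/- For the BdG extension of the spinful Haldane model on a stripe, the unconventional commutator evaluates to ⌈A, B⌋ := A(k)B − B A(−k) = 4i t₂ n_B c₂ cos φ · [cos(k/2)(I₊ + I₋) + cos(k) I₀] ⊗ (s_y ⊗ σ_z). In particular ⌈A, B⌋ vanishes for all k, t₁, t₂, m, q, n_B, c₂ if and only if cos φ = 0 (taking t₂ n_B c₂ ≠ 0), and since A(k) is real this coincides with A(k)B(k) − B(k)A*(−k). -/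
open Matrix Kronecker

namespace BdGHaldane

/-- Pauli matrix σ_x. -/
def sigx : Matrix (Fin 2) (Fin 2) ℂ := !![0, 1; 1, 0]
/-- Pauli matrix σ_y. -/
def sigy : Matrix (Fin 2) (Fin 2) ℂ := !![0, -Complex.I; Complex.I, 0]
/-- Pauli matrix σ_z. -/
def sigz : Matrix (Fin 2) (Fin 2) ℂ := !![1, 0; 0, -1]
/-- Identity σ₀. -/
def sig0 : Matrix (Fin 2) (Fin 2) ℂ := 1
/-- Raising matrix σ₊ = (σ_x + iσ_y)/2. -/
noncomputable def sigp : Matrix (Fin 2) (Fin 2) ℂ := (2 : ℂ)⁻¹ • (sigx + Complex.I • sigy)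
/-- Lowering matrix σ₋ = (σ_x − iσ_y)/2. -/
noncomputable def sigm : Matrix (Fin 2) (Fin 2) ℂ := (2 : ℂ)⁻¹ • (sigx - Complex.I • sigy)

/-- `I₊`: the `N × N` matrix with ones on the superdiagonal. -/
def Isup (N : ℕ) : Matrix (Fin N) (Fin N) ℂ :=
  Matrix.of fun i j => if (i : ℕ) + 1 = (j : ℕ) then 1 else 0

/-- `α(k) = 2t₂cos(φ + k/2) s_z⊗σ_z − t₁ s₀⊗σ₊`. -/
noncomputable def alphaM (t₁ t₂ φ k : ℝ) : Matrix (Fin 2 × Fin 2) (Fin 2 × Fin 2) ℂ :=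
  ((2 * t₂ * Real.cos (φ + k / 2) : ℝ) : ℂ) • (sigz ⊗ₖ sigz) - ((t₁ : ℝ) : ℂ) • (sig0 ⊗ₖ sigp)

/-- `β(k) = 2t₂cos(φ − k) s_z⊗σ_z + m s₀⊗σ_z + q s₀⊗σ₀ − t₁cos(k/2) s₀⊗σ_x`. -/
noncomputable def betaM (t₁ t₂ φ m q k : ℝ) : Matrix (Fin 2 × Fin 2) (Fin 2 × Fin 2) ℂ :=
  ((2 * t₂ * Real.cos (φ - k) : ℝ) : ℂ) • (sigz ⊗ₖ sigz) + ((m : ℝ) : ℂ) • (sig0 ⊗ₖ sigz)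
    + ((q : ℝ) : ℂ) • (sig0 ⊗ₖ sig0) - ((t₁ * Real.cos (k / 2) : ℝ) : ℂ) • (sig0 ⊗ₖ sigx)

/-- `γ(k) = 2t₂cos(φ + k/2) s_z⊗σ_z − t₁ s₀⊗σ₋`. -/
noncomputable def gammaM (t₁ t₂ φ k : ℝ) : Matrix (Fin 2 × Fin 2) (Fin 2 × Fin 2) ℂ :=
  ((2 * t₂ * Real.cos (φ + k / 2) : ℝ) : ℂ) • (sigz ⊗ₖ sigz) - ((t₁ : ℝ) : ℂ) • (sig0 ⊗ₖ sigm)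

/-- `ξ = n_B c₂ s_x⊗σ₀`. -/
def xiM (nB c₂ : ℝ) : Matrix (Fin 2 × Fin 2) (Fin 2 × Fin 2) ℂ :=
  ((nB * c₂ : ℝ) : ℂ) • (sigx ⊗ₖ sig0)

/-- `A(k) = I₋⊗α(k) + I₀⊗β(k) + I₊⊗γ(k)` on a stripe with `N_y` unit cells. -/
noncomputable def AM (N : ℕ) (t₁ t₂ φ m q k : ℝ) :
    Matrix (Fin N × (Fin 2 × Fin 2)) (Fin N × (Fin 2 × Fin 2)) ℂ :=
  (Isup N)ᵀ ⊗ₖ alphaM t₁ t₂ φ k + (1 : Matrix (Fin N) (Fin N) ℂ) ⊗ₖ betaM t₁ t₂ φ m q k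
    + Isup N ⊗ₖ gammaM t₁ t₂ φ k

/-- `B = I₀⊗ξ`. -/
def BM (N : ℕ) (nB c₂ : ℝ) :
    Matrix (Fin N × (Fin 2 × Fin 2)) (Fin N × (Fin 2 × Fin 2)) ℂ :=
  (1 : Matrix (Fin N) (Fin N) ℂ) ⊗ₖ xiM nB c₂

lemma szx : sigz * sigx = Complex.I • sigy := by
  ext i j; fin_cases i <;> fin_cases j <;>
    simp [sigz, sigx, sigy, Matrix.mul_apply, Fin.sum_univ_two]

lemma sxz : sigx * sigz = (-Complex.I) • sigy := by
  ext i j; fin_cases i <;> fin_cases j <;>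
    simp [sigz, sigx, sigy, Matrix.mul_apply, Fin.sum_univ_two]

lemma alpha_block (t₁ t₂ φ nB c₂ k : ℝ) :
    alphaM t₁ t₂ φ k * xiM nB c₂ - xiM nB c₂ * alphaM t₁ t₂ φ (-k)
    = (Complex.I * ((4 * t₂ * nB * c₂ * Real.cos φ : ℝ) : ℂ) * ((Real.cos (k/2) : ℝ) : ℂ)) •
        (sigy ⊗ₖ sigz) := by
  have h : Real.cos (φ + -k / 2) = Real.cos φ * Real.cos (k/2) + Real.sin φ * Real.sin (k/2) := by
    rw [show φ + -k/2 = φ - k/2 by ring, Real.cos_sub]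
  have h2 : Real.cos (φ + k / 2) = Real.cos φ * Real.cos (k/2) - Real.sin φ * Real.sin (k/2) := by
    rw [Real.cos_add]
  unfold alphaM xiM
  rw [h, h2]
  simp only [sub_mul, mul_sub, Matrix.smul_mul, Matrix.mul_smul, ← mul_kronecker_mul,
    szx, sxz, sig0, Matrix.one_mul, Matrix.mul_one, smul_kronecker, kronecker_smul, smul_smul]
  match_scalars
  · push_cast; ring
  · push_cast; ring

lemma gamma_block (t₁ t₂ φ nB c₂ k : ℝ) :
    gammaM t₁ t₂ φ k * xiM nB c₂ - xiM nB c₂ * gammaM t₁ t₂ φ (-k)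
    = (Complex.I * ((4 * t₂ * nB * c₂ * Real.cos φ : ℝ) : ℂ) * ((Real.cos (k/2) : ℝ) : ℂ)) •
        (sigy ⊗ₖ sigz) := by
  have h : Real.cos (φ + -k / 2) = Real.cos φ * Real.cos (k/2) + Real.sin φ * Real.sin (k/2) := by
    rw [show φ + -k/2 = φ - k/2 by ring, Real.cos_sub]
  have h2 : Real.cos (φ + k / 2) = Real.cos φ * Real.cos (k/2) - Real.sin φ * Real.sin (k/2) := by
    rw [Real.cos_add]
  unfold gammaM xiM
  rw [h, h2]
  simp only [sub_mul, mul_sub, Matrix.smul_mul, Matrix.mul_smul, ← mul_kronecker_mul,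
    szx, sxz, sig0, Matrix.one_mul, Matrix.mul_one, smul_kronecker, kronecker_smul, smul_smul]
  match_scalars
  · push_cast; ring
  · push_cast; ring

lemma beta_block (t₁ t₂ φ m q nB c₂ k : ℝ) :
    betaM t₁ t₂ φ m q k * xiM nB c₂ - xiM nB c₂ * betaM t₁ t₂ φ m q (-k)
    = (Complex.I * ((4 * t₂ * nB * c₂ * Real.cos φ : ℝ) : ℂ) * ((Real.cos k : ℝ) : ℂ)) •
        (sigy ⊗ₖ sigz) := by
  have h : Real.cos (φ - k) = Real.cos φ * Real.cos k + Real.sin φ * Real.sin k := by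
    rw [Real.cos_sub]
  have h2 : Real.cos (φ - -k) = Real.cos φ * Real.cos k - Real.sin φ * Real.sin k := by
    rw [show φ - -k = φ + k by ring, Real.cos_add]
  have h3 : Real.cos (-k / 2) = Real.cos (k / 2) := by rw [neg_div, Real.cos_neg]
  unfold betaM xiM
  rw [h, h2, h3]
  simp only [sub_mul, mul_sub, add_mul, mul_add, Matrix.smul_mul, Matrix.mul_smul,
    ← mul_kronecker_mul, szx, sxz, sig0, Matrix.one_mul, Matrix.mul_one, smul_kronecker,
    kronecker_smul, smul_smul]
  match_scalars <;> (push_cast; ring)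

lemma kron_sub {N : ℕ} (M : Matrix (Fin N) (Fin N) ℂ)
    (A B : Matrix (Fin 2 × Fin 2) (Fin 2 × Fin 2) ℂ) :
    M ⊗ₖ (A - B) = M ⊗ₖ A - M ⊗ₖ B := by
  ext ⟨a, b⟩ ⟨c, d⟩
  simp [Matrix.kroneckerMap_apply, mul_sub]

lemma main_formula (N : ℕ) (t₁ t₂ φ m q nB c₂ k : ℝ) :
    AM N t₁ t₂ φ m q k * BM N nB c₂ - BM N nB c₂ * AM N t₁ t₂ φ m q (-k)
      = (Complex.I * ((4 * t₂ * nB * c₂ * Real.cos φ : ℝ) : ℂ)) •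
          ((((Real.cos (k / 2) : ℝ) : ℂ) • (Isup N + (Isup N)ᵀ)
            + ((Real.cos k : ℝ) : ℂ) • (1 : Matrix (Fin N) (Fin N) ℂ)) ⊗ₖ (sigy ⊗ₖ sigz)) := by
  unfold AM BM
  simp only [add_mul, mul_add, ← mul_kronecker_mul, Matrix.one_mul, Matrix.mul_one]
  have key : ∀ (X : Matrix (Fin N) (Fin N) ℂ) A B,
      X ⊗ₖ A - X ⊗ₖ B = X ⊗ₖ (A - B) := fun X A B => (kron_sub X A B).symm
  calc (Isup N)ᵀ ⊗ₖ (alphaM t₁ t₂ φ k * xiM nB c₂)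
        + (1 : Matrix (Fin N) (Fin N) ℂ) ⊗ₖ (betaM t₁ t₂ φ m q k * xiM nB c₂)
        + Isup N ⊗ₖ (gammaM t₁ t₂ φ k * xiM nB c₂)
        - ((Isup N)ᵀ ⊗ₖ (xiM nB c₂ * alphaM t₁ t₂ φ (-k))
          + (1 : Matrix (Fin N) (Fin N) ℂ) ⊗ₖ (xiM nB c₂ * betaM t₁ t₂ φ m q (-k))
          + Isup N ⊗ₖ (xiM nB c₂ * gammaM t₁ t₂ φ (-k)))
      = (Isup N)ᵀ ⊗ₖ (alphaM t₁ t₂ φ k * xiM nB c₂ - xiM nB c₂ * alphaM t₁ t₂ φ (-k))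
        + (1 : Matrix (Fin N) (Fin N) ℂ) ⊗ₖ
            (betaM t₁ t₂ φ m q k * xiM nB c₂ - xiM nB c₂ * betaM t₁ t₂ φ m q (-k))
        + Isup N ⊗ₖ (gammaM t₁ t₂ φ k * xiM nB c₂ - xiM nB c₂ * gammaM t₁ t₂ φ (-k)) := by
        rw [kron_sub, kron_sub, kron_sub]; abel
    _ = _ := by
        rw [alpha_block, beta_block, gamma_block]
        simp only [kronecker_smul, smul_kronecker, add_kronecker, smul_smul, smul_add]
        module

lemma entry_ne (N : ℕ) (hN : 0 < N) (c : ℂ)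
    (h : c • ((((1:ℂ)) • (Isup N + (Isup N)ᵀ) + ((1:ℂ)) • (1 : Matrix (Fin N) (Fin N) ℂ))
        ⊗ₖ (sigy ⊗ₖ sigz)) = 0) : c = 0 := by
  have h0 := congrFun (congrFun h (⟨0, hN⟩, (0, 0))) (⟨0, hN⟩, (1, 0))
  simp [Matrix.kroneckerMap_apply, Matrix.one_apply, Isup, sigy, sigz,
    Matrix.add_apply, Complex.ext_iff] at h0
  simpa [Complex.ext_iff] using h0

lemma alpha_conj (t₁ t₂ φ k : ℝ) (p p' : Fin 2 × Fin 2) :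
    (starRingEnd ℂ) (alphaM t₁ t₂ φ k p p') = alphaM t₁ t₂ φ k p p' := by
  obtain ⟨i, j⟩ := p; obtain ⟨i', j'⟩ := p'
  fin_cases i <;> fin_cases j <;> fin_cases i' <;> fin_cases j' <;>
    simp [alphaM, sigz, sigp, sigx, sigy, sig0, Matrix.kroneckerMap_apply, Matrix.one_apply,
      Complex.ext_iff, Prod.ext_iff, -Complex.ofReal_cos, -Complex.ofReal_sin]

lemma gamma_conj (t₁ t₂ φ k : ℝ) (p p' : Fin 2 × Fin 2) :
    (starRingEnd ℂ) (gammaM t₁ t₂ φ k p p') = gammaM t₁ t₂ φ k p p' := by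
  obtain ⟨i, j⟩ := p; obtain ⟨i', j'⟩ := p'
  fin_cases i <;> fin_cases j <;> fin_cases i' <;> fin_cases j' <;>
    simp [gammaM, sigz, sigm, sigx, sigy, sig0, Matrix.kroneckerMap_apply, Matrix.one_apply,
      Complex.ext_iff, Prod.ext_iff, -Complex.ofReal_cos, -Complex.ofReal_sin]

lemma beta_conj (t₁ t₂ φ m q k : ℝ) (p p' : Fin 2 × Fin 2) :
    (starRingEnd ℂ) (betaM t₁ t₂ φ m q k p p') = betaM t₁ t₂ φ m q k p p' := by
  obtain ⟨i, j⟩ := p; obtain ⟨i', j'⟩ := p'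
  fin_cases i <;> fin_cases j <;> fin_cases i' <;> fin_cases j' <;>
    simp [betaM, sigz, sigx, sigy, sig0, Matrix.kroneckerMap_apply, Matrix.one_apply,
      Complex.ext_iff, Prod.ext_iff, -Complex.ofReal_cos, -Complex.ofReal_sin]

lemma kron_conj {N : ℕ} (M : Matrix (Fin N) (Fin N) ℂ)
    (hM : ∀ i j, (starRingEnd ℂ) (M i j) = M i j)
    (P : Matrix (Fin 2 × Fin 2) (Fin 2 × Fin 2) ℂ)
    (hP : ∀ p p', (starRingEnd ℂ) (P p p') = P p p') :
    (M ⊗ₖ P).map (starRingEnd ℂ) = M ⊗ₖ P := by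
  ext ⟨a, b⟩ ⟨c, d⟩
  simp [Matrix.map_apply, Matrix.kroneckerMap_apply, _root_.map_mul, hM, hP]

lemma Isup_conj (N : ℕ) (i j : Fin N) : (starRingEnd ℂ) (Isup N i j) = Isup N i j := by
  simp [Isup, apply_ite]

lemma one_conj (N : ℕ) (i j : Fin N) :
    (starRingEnd ℂ) ((1 : Matrix (Fin N) (Fin N) ℂ) i j)
      = (1 : Matrix (Fin N) (Fin N) ℂ) i j := by
  simp [Matrix.one_apply, apply_ite]

lemma AM_conj (N : ℕ) (t₁ t₂ φ m q k : ℝ) :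
    (AM N t₁ t₂ φ m q k).map (starRingEnd ℂ) = AM N t₁ t₂ φ m q k := by
  unfold AM
  rw [Matrix.map_add, Matrix.map_add,
    kron_conj (Isup N)ᵀ (fun i j => Isup_conj N j i) _ (alpha_conj t₁ t₂ φ k),
    kron_conj _ (one_conj N) _ (beta_conj t₁ t₂ φ m q k),
    kron_conj _ (Isup_conj N) _ (gamma_conj t₁ t₂ φ k)]
  all_goals exact fun a₁ a₂ => map_add _ a₁ a₂

/-- **Unconventional commutator of the BdG spinful Haldane stripe model.**
`⌈A,B⌋ = A(k)B − B A(−k) = 4i t₂ n_B c₂ cos φ · [cos(k/2)(I₊+I₋) + cos k I₀] ⊗ (s_y⊗σ_z)`;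
it vanishes for all `k, t₁, m, q` (with `t₂ n_B c₂ ≠ 0`) iff `cos φ = 0`; and since
`A(k)` is real this coincides with `A(k)B(k) − B(k)A*(−k)`. -/
theorem unconventional_commutator_haldane_stripe (N : ℕ) (hN : 0 < N) :
    (∀ t₁ t₂ φ m q nB c₂ k : ℝ,
      AM N t₁ t₂ φ m q k * BM N nB c₂ - BM N nB c₂ * AM N t₁ t₂ φ m q (-k)
        = (Complex.I * ((4 * t₂ * nB * c₂ * Real.cos φ : ℝ) : ℂ)) •
            ((((Real.cos (k / 2) : ℝ) : ℂ) • (Isup N + (Isup N)ᵀ)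
              + ((Real.cos k : ℝ) : ℂ) • (1 : Matrix (Fin N) (Fin N) ℂ)) ⊗ₖ (sigy ⊗ₖ sigz)))
    ∧ (∀ t₂ φ nB c₂ : ℝ, t₂ * nB * c₂ ≠ 0 →
        ((∀ t₁ m q k : ℝ,
          AM N t₁ t₂ φ m q k * BM N nB c₂ - BM N nB c₂ * AM N t₁ t₂ φ m q (-k) = 0)
          ↔ Real.cos φ = 0))
    ∧ (∀ t₁ t₂ φ m q nB c₂ k : ℝ,
        AM N t₁ t₂ φ m q k * BM N nB c₂
            - BM N nB c₂ * (AM N t₁ t₂ φ m q (-k)).map (starRingEnd ℂ)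
          = AM N t₁ t₂ φ m q k * BM N nB c₂ - BM N nB c₂ * AM N t₁ t₂ φ m q (-k)) := by
  refine ⟨fun t₁ t₂ φ m q nB c₂ k => main_formula N t₁ t₂ φ m q nB c₂ k, ?_, ?_⟩
  · intro t₂ φ nB c₂ hne
    constructor
    · intro H
      have h0 := H 0 0 0 0
      rw [main_formula] at h0
      simp only [Real.cos_zero, zero_div] at h0
      have hc := entry_ne N hN _ (by
        convert h0 using 3 <;> norm_num)
      have : (4 * t₂ * nB * c₂ * Real.cos φ : ℝ) = 0 := by
        have : ((4 * t₂ * nB * c₂ * Real.cos φ : ℝ) : ℂ) = 0 := by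
          rcases mul_eq_zero.1 hc with h | h
          · exact absurd h (by simp [Complex.I_ne_zero])
          · exact h
        exact_mod_cast this
      have h4 : (4 : ℝ) * (t₂ * nB * c₂) ≠ 0 := by
        intro hz
        rcases mul_eq_zero.1 hz with h | h
        · norm_num at h
        · exact hne h
      have := mul_eq_zero.1 (by linarith [this] : (4 * (t₂ * nB * c₂)) * Real.cos φ = 0)
      tauto
    · intro hcos t₁ m q k
      rw [main_formula]
      simp [hcos]
  · intro t₁ t₂ φ m q nB c₂ k
    rw [AM_conj]


end BdGHaldane
end

section
/- Let A be a Hermitian n×n complex matrix and c a real scalar. Then the spectrum of the 2n×2n Nambu matrix M = [[A, cI], [−cI, −A]] is exactly {λ ∈ ℂ : λ² = ω² − c² for some eigenvalue ω of A}; that is, λ is an eigenvalue of M if and only if there exists an eigenvalue ω of A with λ² = ω² − c². (This is the spectrum E_n(k) = ±√(ω_n(k)² − n_B²c₂²) of the ⇑ sector of the time-reversal-symmetric BdG model.) -/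
open Matrix

lemma eig_iff_det {n : ℕ} (B : Matrix (Fin n) (Fin n) ℂ) (ω : ℂ) :
    (∃ v : Fin n → ℂ, v ≠ 0 ∧ B.mulVec v = ω • v) ↔ (B - ω • 1).det = 0 := by
  rw [← Matrix.exists_mulVec_eq_zero_iff]
  apply exists_congr; intro v
  apply and_congr_right; intro _
  rw [sub_mulVec, smul_mulVec, one_mulVec, sub_eq_zero]

/-- **Spectrum of the Nambu matrix with Hermitian block and real scalar pairing.**
For Hermitian `A` and real `c`, `λ` is an eigenvalue of `M = [[A, cI], [−cI, −A]]`
if and only if there exists an eigenvalue `ω` of `A` with `λ² = ω² − c²`. -/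
theorem nambu_scalar_pairing_spectrum {n : ℕ}
    (A : Matrix (Fin n) (Fin n) ℂ) (hA : A.IsHermitian) (c : ℝ)
    (M : Matrix (Fin n ⊕ Fin n) (Fin n ⊕ Fin n) ℂ)
    (hM : M = Matrix.fromBlocks A ((c : ℂ) • (1 : Matrix (Fin n) (Fin n) ℂ))
                (-((c : ℂ) • (1 : Matrix (Fin n) (Fin n) ℂ))) (-A))
    (lam : ℂ) :
    (∃ w : Fin n ⊕ Fin n → ℂ, w ≠ 0 ∧ M.mulVec w = lam • w) ↔
      (∃ ω : ℂ, (∃ v : Fin n → ℂ, v ≠ 0 ∧ A.mulVec v = ω • v) ∧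
        lam ^ 2 = ω ^ 2 - (c : ℂ) ^ 2) := by
  set μ : ℂ := lam ^ 2 + (c : ℂ) ^ 2 with hμ
  obtain ⟨s, hs⟩ := IsAlgClosed.exists_pow_nat_eq μ zero_lt_two
  constructor
  · rintro ⟨w, hw0, hw⟩
    have hfac : (A - s • 1) * (A + s • 1) = A * A - μ • 1 := by
      rw [← hs]
      simp only [Matrix.mul_add, Matrix.sub_mul, Matrix.smul_mul, Matrix.mul_smul,
        Matrix.one_mul, Matrix.mul_one, smul_add, smul_sub, smul_smul, ← sq]
      abel
    subst hM
    set v₁ : Fin n → ℂ := w ∘ Sum.inl with hv₁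
    set v₂ : Fin n → ℂ := w ∘ Sum.inr with hv₂
    rw [← Sum.elim_comp_inl_inr w, fromBlocks_mulVec] at hw
    have h1 : A.mulVec v₁ + (c : ℂ) • v₂ = lam • v₁ := by
      funext i
      simpa [smul_mulVec, one_mulVec, hv₁, hv₂] using congrFun hw (Sum.inl i)
    have h2 : -((c : ℂ) • v₁) - A.mulVec v₂ = lam • v₂ := by
      funext i
      simpa [neg_mulVec, smul_mulVec, one_mulVec, sub_eq_add_neg, hv₁, hv₂] using
        congrFun hw (Sum.inr i)
    have hAv₁ : A.mulVec v₁ = lam • v₁ - (c : ℂ) • v₂ := by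
      rw [← h1]; abel
    have hAv₂ : A.mulVec v₂ = -((c : ℂ) • v₁) - lam • v₂ := by
      rw [← h2]; abel
    have key : ∀ v : Fin n → ℂ, v ≠ 0 → A.mulVec (A.mulVec v) = μ • v →
        ∃ ω : ℂ, (∃ v : Fin n → ℂ, v ≠ 0 ∧ A.mulVec v = ω • v) ∧
          lam ^ 2 = ω ^ 2 - (c : ℂ) ^ 2 := by
      intro v hv0 hv
      have hdet : ((A - s • 1) * (A + s • 1)).det = 0 := by
        rw [hfac, ← Matrix.exists_mulVec_eq_zero_iff]
        refine ⟨v, hv0, ?_⟩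
        rw [sub_mulVec, smul_mulVec, one_mulVec, ← mulVec_mulVec, hv, sub_self]
      rw [Matrix.det_mul, mul_eq_zero] at hdet
      rcases hdet with hdet | hdet
      · exact ⟨s, (eig_iff_det A s).2 hdet, by rw [hs, hμ]; ring⟩
      · refine ⟨-s, (eig_iff_det A (-s)).2 ?_, ?_⟩
        · rw [neg_smul, sub_neg_eq_add]; exact hdet
        · rw [show ((-s) ^ 2 : ℂ) = s ^ 2 by ring, hs, hμ]; ring
    have hA1 : A.mulVec (A.mulVec v₁) = μ • v₁ := by
      rw [hAv₁, mulVec_sub, mulVec_smul, mulVec_smul, hAv₁, hAv₂, hμ]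
      funext i
      simp only [Pi.add_apply, Pi.sub_apply, Pi.smul_apply, Pi.neg_apply, smul_eq_mul]
      ring
    have hA2 : A.mulVec (A.mulVec v₂) = μ • v₂ := by
      rw [hAv₂, mulVec_sub, mulVec_neg, mulVec_smul, mulVec_smul, hAv₁, hAv₂, hμ]
      funext i
      simp only [Pi.add_apply, Pi.sub_apply, Pi.smul_apply, Pi.neg_apply, smul_eq_mul]
      ring
    by_cases h0 : v₁ = 0
    · have hv2 : v₂ ≠ 0 := by
        intro h0'
        apply hw0
        funext x
        cases x with
        | inl i => exact congrFun h0 i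
        | inr i => exact congrFun h0' i
      exact key v₂ hv2 hA2
    · exact key v₁ h0 hA1
  · rintro ⟨ω, ⟨v, hv0, hv⟩, hω⟩
    obtain ⟨i, hi⟩ : ∃ i, v i ≠ 0 := Function.ne_iff.1 hv0
    have build : ∀ a b : ℂ, (a ≠ 0 ∨ b ≠ 0) → ω * a + (c : ℂ) * b = lam * a →
        -((c : ℂ) * a) - ω * b = lam * b →
        ∃ w : Fin n ⊕ Fin n → ℂ, w ≠ 0 ∧ M.mulVec w = lam • w := by
      intro a b hab ha hb
      refine ⟨Sum.elim (a • v) (b • v), ?_, ?_⟩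
      · intro h0
        rcases hab with hab | hab
        · exact hab (by
            have := congrFun h0 (Sum.inl i)
            simp only [Sum.elim_inl, Pi.smul_apply, smul_eq_mul, Pi.zero_apply] at this
            exact (mul_eq_zero.1 this).resolve_right hi)
        · exact hab (by
            have := congrFun h0 (Sum.inr i)
            simp only [Sum.elim_inr, Pi.smul_apply, smul_eq_mul, Pi.zero_apply] at this
            exact (mul_eq_zero.1 this).resolve_right hi)
      · subst hM
        rw [fromBlocks_mulVec]
        simp only [Sum.elim_comp_inl, Sum.elim_comp_inr, mulVec_smul, hv, neg_mulVec,
          smul_mulVec, one_mulVec]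
        funext x
        cases x with
        | inl j =>
          simp only [Sum.elim_inl, Pi.add_apply, Pi.smul_apply, smul_eq_mul,
            Pi.neg_apply]
          linear_combination v j * ha
        | inr j =>
          simp only [Sum.elim_inr, Pi.add_apply, Pi.smul_apply, smul_eq_mul,
            Pi.neg_apply]
          linear_combination v j * hb
    by_cases hc : (c : ℂ) = 0 ∧ lam = ω
    · exact build 1 0 (Or.inl one_ne_zero) (by rw [hc.2]; ring) (by rw [hc.1]; ring)
    · refine build (c : ℂ) (lam - ω) ?_ (by ring) (by linear_combination -hω)
      rcases Classical.em ((c : ℂ) = 0) with h | h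
      · right
        intro h'
        exact hc ⟨h, sub_eq_zero.1 h'⟩
      · exact Or.inl h
end

section
/- Let A be a Hermitian n×n complex matrix and c a real scalar. All eigenvalues of the 2n×2n Nambu matrix M = [[A, cI], [−cI, −A]] are real if and only if every eigenvalue ω of A satisfies ω² ≥ c²; moreover, if some eigenvalue ω of A satisfies |ω| < |c|, then M has the purely imaginary, nonreal eigenvalues ±i√(c² − ω²) (dynamical instability). -/
open Matrix
open scoped ComplexOrder

lemma herm_eig_real' {n : ℕ} {A : Matrix (Fin n) (Fin n) ℂ} (hA : A.IsHermitian)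
    {v : Fin n → ℂ} {ω : ℂ} (hv : v ≠ 0) (h : A.mulVec v = ω • v) : ω.im = 0 := by
  have hp : dotProduct (star v) v ≠ 0 := fun h0 => hv (dotProduct_star_self_eq_zero.mp h0)
  have h1 : dotProduct (star v) (A.mulVec v) = ω * dotProduct (star v) v := by
    rw [h, dotProduct_smul, smul_eq_mul]
  have h2 : dotProduct (star v) (A.mulVec v) = (starRingEnd ℂ) ω * dotProduct (star v) v := by
    rw [dotProduct_mulVec]
    have hst : star v ᵥ* A = star (A *ᵥ v) := by rw [star_mulVec, hA.eq]
    rw [hst, h, star_smul, smul_dotProduct, smul_eq_mul]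
    rfl
  have : ω = (starRingEnd ℂ) ω := mul_right_cancel₀ hp (h1.symm.trans h2)
  exact Complex.conj_eq_iff_im.mp this.symm

lemma sq_eig' {n : ℕ} {A : Matrix (Fin n) (Fin n) ℂ}
    {v : Fin n → ℂ} {μ : ℂ} (hv : v ≠ 0) (h : (A * A).mulVec v = μ • v) :
    ∃ ω : ℂ, (∃ u : Fin n → ℂ, u ≠ 0 ∧ A.mulVec u = ω • u) ∧ ω ^ 2 = μ := by
  obtain ⟨s, hs⟩ := IsAlgClosed.exists_pow_nat_eq (k := ℂ) μ (n := 2) zero_lt_two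
  set u := A.mulVec v + s • v with hu
  have key : A.mulVec u = s • u := by
    rw [hu, A.mulVec_add, A.mulVec_smul, Matrix.mulVec_mulVec, h, ← hs, smul_add, smul_smul]
    rw [pow_two]
    abel
  by_cases hu0 : u = 0
  · refine ⟨-s, ⟨v, hv, ?_⟩, by rw [neg_pow, hs]; norm_num⟩
    have : A.mulVec v = -(s • v) := by
      have := hu0; rw [hu] at this; linear_combination (norm := module) this
    rw [this, neg_smul]
  · exact ⟨s, ⟨u, hu0, key⟩, hs⟩

-- generic eigenvector construction for M
lemma nambu_vec' {n : ℕ} {A : Matrix (Fin n) (Fin n) ℂ} {c : ℝ}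
    {M : Matrix (Fin n ⊕ Fin n) (Fin n ⊕ Fin n) ℂ}
    (hM : M = Matrix.fromBlocks A ((c : ℂ) • (1 : Matrix (Fin n) (Fin n) ℂ))
                (-((c : ℂ) • (1 : Matrix (Fin n) (Fin n) ℂ))) (-A))
    {v : Fin n → ℂ} {ω ν : ℂ} (hv : v ≠ 0) (hAv : A.mulVec v = ω • v)
    (hν : ν ^ 2 = ω ^ 2 - (c : ℂ) ^ 2) (hc : (c : ℂ) ≠ 0) :
    ∃ w : Fin n ⊕ Fin n → ℂ, w ≠ 0 ∧ M.mulVec w = ν • w := by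
  refine ⟨Sum.elim ((c : ℂ) • v) ((ν - ω) • v), ?_, ?_⟩
  · obtain ⟨i, hi⟩ := Function.ne_iff.mp hv
    intro h0
    exact hi (by simpa [hc] using congrFun h0 (Sum.inl i))
  · rw [hM, fromBlocks_mulVec]
    funext x
    cases x with
    | inl i =>
        simp [mulVec_smul, hAv, smul_mulVec, Pi.smul_apply, smul_eq_mul]
        ring
    | inr i =>
        simp [mulVec_smul, hAv, smul_mulVec, Pi.smul_apply, smul_eq_mul, neg_mulVec]
        linear_combination (-(v i)) * hν

lemma real_sq' {ω : ℂ} (h : ω.im = 0) : ω ^ 2 = ((Complex.normSq ω : ℝ) : ℂ) := by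
  rw [Complex.normSq_apply, h]
  apply Complex.ext <;> simp [sq, Complex.mul_re, Complex.mul_im, h]

/-- **Dynamical stability criterion for the Nambu matrix with scalar pairing.**
For Hermitian `A` and real `c`, all eigenvalues of `M = [[A, cI], [−cI, −A]]` are real
iff every eigenvalue `ω` of `A` satisfies `ω² ≥ c²`; moreover if some eigenvalue `ω`
of `A` satisfies `|ω| < |c|`, then `M` has the purely imaginary, nonreal eigenvalues
`±i√(c² − ω²)` (dynamical instability). -/
theorem nambu_scalar_pairing_stability {n : ℕ}
    (A : Matrix (Fin n) (Fin n) ℂ) (hA : A.IsHermitian) (c : ℝ)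
    (M : Matrix (Fin n ⊕ Fin n) (Fin n ⊕ Fin n) ℂ)
    (hM : M = Matrix.fromBlocks A ((c : ℂ) • (1 : Matrix (Fin n) (Fin n) ℂ))
                (-((c : ℂ) • (1 : Matrix (Fin n) (Fin n) ℂ))) (-A)) :
    ((∀ lam : ℂ, (∃ w : Fin n ⊕ Fin n → ℂ, w ≠ 0 ∧ M.mulVec w = lam • w) → lam.im = 0)
      ↔ (∀ ω : ℂ, (∃ v : Fin n → ℂ, v ≠ 0 ∧ A.mulVec v = ω • v) →
          c ^ 2 ≤ Complex.normSq ω))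
    ∧ (∀ ω : ℂ, (∃ v : Fin n → ℂ, v ≠ 0 ∧ A.mulVec v = ω • v) →
        ‖ω‖ < |c| →
        (let μ : ℂ := Complex.I * (Real.sqrt (c ^ 2 - Complex.normSq ω) : ℝ);
          (∃ w : Fin n ⊕ Fin n → ℂ, w ≠ 0 ∧ M.mulVec w = μ • w)
          ∧ (∃ w : Fin n ⊕ Fin n → ℂ, w ≠ 0 ∧ M.mulVec w = (-μ) • w)
          ∧ μ.re = 0 ∧ μ.im ≠ 0)) := by
  have inst : ∀ ω : ℂ, (∃ v : Fin n → ℂ, v ≠ 0 ∧ A.mulVec v = ω • v) →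
      ‖ω‖ < |c| →
      (let μ : ℂ := Complex.I * (Real.sqrt (c ^ 2 - Complex.normSq ω) : ℝ);
        (∃ w : Fin n ⊕ Fin n → ℂ, w ≠ 0 ∧ M.mulVec w = μ • w)
        ∧ (∃ w : Fin n ⊕ Fin n → ℂ, w ≠ 0 ∧ M.mulVec w = (-μ) • w)
        ∧ μ.re = 0 ∧ μ.im ≠ 0) := by
    rintro ω ⟨v, hv, hAv⟩ hlt
    have hωim := herm_eig_real' hA hv hAv
    have hcne : (c : ℝ) ≠ 0 := by
      intro h0
      rw [h0] at hlt
      simp at hlt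
      exact absurd hlt (not_lt.mpr (norm_nonneg ω))
    have hc : (c : ℂ) ≠ 0 := Complex.ofReal_ne_zero.mpr hcne
    have hns : Complex.normSq ω < c ^ 2 := by
      nlinarith [Complex.sq_norm ω, norm_nonneg ω, abs_nonneg c, sq_abs c]
    set r := Real.sqrt (c ^ 2 - Complex.normSq ω) with hr
    have hr0 : 0 < r := Real.sqrt_pos.mpr (by linarith)
    have hr2 : r ^ 2 = c ^ 2 - Complex.normSq ω := Real.sq_sqrt (by linarith)
    have hμ2 : (Complex.I * (r : ℂ)) ^ 2 = ω ^ 2 - (c : ℂ) ^ 2 := by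
      rw [mul_pow, Complex.I_sq, real_sq' hωim, ← Complex.ofReal_pow, hr2]
      push_cast
      ring
    refine ⟨nambu_vec' hM hv hAv hμ2 hc, nambu_vec' hM hv hAv (by rw [neg_sq]; exact hμ2) hc, ?_, ?_⟩
    · simp
    · simpa using ne_of_gt hr0
  constructor
  · constructor
    · intro h ω hex
      by_contra hlt'
      push_neg at hlt'
      have habs : ‖ω‖ < |c| := by
        nlinarith [Complex.sq_norm ω, norm_nonneg ω, abs_nonneg c, sq_abs c]
      obtain ⟨⟨w, hw, hMw⟩, -, -, him⟩ := inst ω hex habs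
      exact him (h _ ⟨w, hw, hMw⟩)
    · intro h lam ⟨w, hw, hMw⟩
      have hM2 : M * M = fromBlocks (A * A - ((c : ℂ) ^ 2) • 1) 0 0 (A * A - ((c : ℂ) ^ 2) • 1) := by
        rw [hM, fromBlocks_multiply]
        congr 1 <;>
            simp [Matrix.smul_mul, Matrix.mul_smul, smul_smul, sq, mul_neg, neg_mul,
              sub_eq_add_neg] <;>
          rw [← Complex.ofReal_mul, ← Complex.coe_smul] <;> try abel
      have hw2 : (M * M) *ᵥ w = (lam ^ 2) • w := by
        rw [← mulVec_mulVec, hMw, mulVec_smul, hMw, smul_smul, ← sq]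
      rw [hM2, fromBlocks_mulVec] at hw2
      have hcomp : ∀ (vk : Fin n → ℂ), vk ≠ 0 →
          (A * A - (c : ℂ) ^ 2 • 1) *ᵥ vk = lam ^ 2 • vk → lam.im = 0 := by
        intro vk hvk hk
        have hAA : (A * A) *ᵥ vk = (lam ^ 2 + (c : ℂ) ^ 2) • vk := by
          rw [sub_mulVec, smul_mulVec, one_mulVec] at hk
          rw [add_smul]
          linear_combination (norm := module) hk
        obtain ⟨ω, ⟨u, hu, hAu⟩, hω2⟩ := sq_eig' hvk hAA
        have hωim := herm_eig_real' hA hu hAu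
        have hge := h ω ⟨u, hu, hAu⟩
        have hlam2 : lam ^ 2 = ((Complex.normSq ω - c ^ 2 : ℝ) : ℂ) := by
          rw [real_sq' hωim] at hω2
          push_cast
          linear_combination -hω2
        have him0 : lam.re * lam.im + lam.im * lam.re = 0 := by
          have := congrArg Complex.im hlam2
          rw [Complex.ofReal_im, sq, Complex.mul_im] at this
          exact this
        have hre0 : 0 ≤ lam.re * lam.re - lam.im * lam.im := by
          have := congrArg Complex.re hlam2
          rw [Complex.ofReal_re, sq, Complex.mul_re] at this
          rw [this]
          linarith
        have hxy : lam.re * lam.im = 0 := by linarith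
        rcases mul_eq_zero.mp hxy with hx | hy
        · have : lam.im * lam.im = 0 :=
            le_antisymm (by nlinarith) (mul_self_nonneg _)
          exact mul_self_eq_zero.mp this
        · exact hy
      have hne : (w ∘ Sum.inl) ≠ 0 ∨ (w ∘ Sum.inr) ≠ 0 := by
        by_contra hcon
        push_neg at hcon
        apply hw
        funext x
        cases x with
        | inl i => exact congrFun hcon.1 i
        | inr i => exact congrFun hcon.2 i
      rcases hne with h1 | h2
      · refine hcomp _ h1 ?_
        funext i
        have := congrFun hw2 (Sum.inl i)
        simpa using this
      · refine hcomp _ h2 ?_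
        funext i
        have := congrFun hw2 (Sum.inr i)
        simpa using this
  · exact inst
end
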